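/- Let V be a ℚ[SL₂(ℤ)]-module of length ≤ n satisfying the identities (1/(n-k)!)·w x^{n-k} w x^{n-1} = ((-1)^{n-k}/(k-1)!)·x^{k-1} w x^{n-1} in End(V) for k = 1,…,n, where x = log u. Then V_⊤ := ⨁_{k=1}^n im(π_k) (with π_k = (1/((n-1)!)²)·x^{n-k} w x^{n-1} w x^{k-1}) is an SL₂(ℤ)-invariant subspace of V, and the quotient V/V_⊤ satisfies (u-1)^{n-1} = 0. -/

import Mathlib

open Matrix

def u : Matrix.SpecialLinearGroup (Fin 2) ℤ :=
  ⟨!![1, 1; 0, 1], by simp [Matrix.det_fin_two_of]⟩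

def w : Matrix.SpecialLinearGroup (Fin 2) ℤ :=
  ⟨!![0, 1; -1, 0], by simp [Matrix.det_fin_two_of]⟩

lemma u_coe_zpow (m : ℤ) :
    ((u ^ m : Matrix.SpecialLinearGroup (Fin 2) ℤ) : Matrix (Fin 2) (Fin 2) ℤ)
      = !![1, m; 0, 1] := by
  induction m using Int.induction_on with
  | zero => simp [Matrix.one_fin_two]
  | succ k ih =>
      rw [_root_.zpow_add_one, Matrix.SpecialLinearGroup.coe_mul, ih]
      simp [u, Matrix.mul_fin_two, add_comm]
  | pred k ih =>
      rw [_root_.zpow_sub_one, Matrix.SpecialLinearGroup.coe_mul, ih]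
      have hui : (u⁻¹ : Matrix.SpecialLinearGroup (Fin 2) ℤ)
          = ⟨!![1, -1; 0, 1], by simp [Matrix.det_fin_two_of]⟩ := by
        apply inv_eq_of_mul_eq_one_right
        ext i j
        change (((u : Matrix (Fin 2) (Fin 2) ℤ) * !![1, -1; 0, 1] : Matrix (Fin 2) (Fin 2) ℤ)) i j = (1 : Matrix (Fin 2) (Fin 2) ℤ) i j
        fin_cases i <;> fin_cases j <;> simp [u, Matrix.mul_fin_two]
      rw [hui]
      simp [Matrix.mul_fin_two, sub_eq_add_neg, add_comm]

lemma natAbs_emod_lt (a c : ℤ) (hc : c ≠ 0) : (a % c).natAbs < c.natAbs := by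
  have h1 : 0 ≤ a % c := Int.emod_nonneg a hc
  rcases lt_or_gt_of_ne hc with h | h
  · have h2 : a % (-c) < -c := Int.emod_lt_of_pos a (by omega)
    rw [Int.emod_neg] at h2
    omega
  · have h2 : a % c < c := Int.emod_lt_of_pos a h
    omega

lemma mem_closure_uw (A : Matrix.SpecialLinearGroup (Fin 2) ℤ) :
    A ∈ Subgroup.closure ({u, w} : Set (Matrix.SpecialLinearGroup (Fin 2) ℤ)) := by
  set cl := Subgroup.closure ({u, w} : Set (Matrix.SpecialLinearGroup (Fin 2) ℤ)) with hcl
  have hu : u ∈ cl := Subgroup.subset_closure (by simp)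
  have hw : w ∈ cl := Subgroup.subset_closure (by simp)
  suffices H : ∀ m : ℕ, ∀ A : Matrix.SpecialLinearGroup (Fin 2) ℤ,
      ((A : Matrix (Fin 2) (Fin 2) ℤ) 1 0).natAbs = m → A ∈ cl by exact H _ A rfl
  intro m
  induction m using Nat.strong_induction_on with
  | _ m IH =>
    intro A hA
    have hdet : (A : Matrix (Fin 2) (Fin 2) ℤ).det = 1 := A.2
    rw [Matrix.det_fin_two] at hdet
    by_cases hc : (A : Matrix (Fin 2) (Fin 2) ℤ) 1 0 = 0
    · -- triangular case
      have h11 : (A : Matrix (Fin 2) (Fin 2) ℤ) 0 0 * (A : Matrix (Fin 2) (Fin 2) ℤ) 1 1 = 1 := by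
        rw [hc] at hdet; ring_nf at hdet ⊢; linarith
      rcases Int.mul_eq_one_iff_eq_one_or_neg_one.mp h11 with ⟨h00, h11'⟩ | ⟨h00, h11'⟩
      · -- A = u ^ b
        have : A = u ^ ((A : Matrix (Fin 2) (Fin 2) ℤ) 0 1) := by
          apply Subtype.ext
          rw [u_coe_zpow]
          conv_lhs => rw [Matrix.eta_fin_two (A : Matrix (Fin 2) (Fin 2) ℤ)]
          rw [h00, h11', hc]
        rw [this]
        exact zpow_mem hu _
      · have : A = w * w * u ^ (-(A : Matrix (Fin 2) (Fin 2) ℤ) 0 1) := by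
          apply Subtype.ext
          rw [Matrix.SpecialLinearGroup.coe_mul, Matrix.SpecialLinearGroup.coe_mul, u_coe_zpow]
          conv_lhs => rw [Matrix.eta_fin_two (A : Matrix (Fin 2) (Fin 2) ℤ)]
          rw [h00, h11', hc]
          simp [w, Matrix.mul_fin_two]
        rw [this]
        exact mul_mem (mul_mem hw hw) (zpow_mem hu _)
    · -- reduction step
      set a := (A : Matrix (Fin 2) (Fin 2) ℤ) 0 0 with ha
      set c := (A : Matrix (Fin 2) (Fin 2) ℤ) 1 0 with hcdef
      set q := a / c with hq
      set B := w * (u ^ (-q) * A) with hB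
      have hBent : (B : Matrix (Fin 2) (Fin 2) ℤ) 1 0 = -(a % c) := by
        rw [hB, Matrix.SpecialLinearGroup.coe_mul, Matrix.SpecialLinearGroup.coe_mul, u_coe_zpow,
          Matrix.eta_fin_two (A : Matrix (Fin 2) (Fin 2) ℤ)]
        simp [w, Matrix.mul_fin_two, ← ha, ← hcdef]
        rw [Int.emod_def, ← hq]
        ring
      have hlt : ((B : Matrix (Fin 2) (Fin 2) ℤ) 1 0).natAbs < m := by
        rw [hBent, ← hA]
        simpa using natAbs_emod_lt a c hc
      have hBcl : B ∈ cl := IH _ hlt B rfl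
      have hA' : A = u ^ q * (w⁻¹ * B) := by
        rw [hB]
        group
      rw [hA']
      exact mul_mem (zpow_mem hu _) (mul_mem (inv_mem hw) hBcl)
open Polynomial in
lemma exists_comp_congr (n : ℕ) (s : Polynomial ℚ) :
    ∀ d j : ℕ, n ≤ j + d → ∃ Q : Polynomial ℚ,
      (X : Polynomial ℚ) ^ n ∣ Q.comp (X * (1 + X * s)) - X ^ j := by
  intro d
  induction d with
  | zero =>
    intro j hj
    refine ⟨0, ?_⟩
    rw [zero_comp, zero_sub]
    exact (dvd_neg).2 (pow_dvd_pow _ (by omega))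
  | succ d IH =>
    intro j hj
    by_cases h : n ≤ j + d
    · exact IH j h
    set L : Polynomial ℚ := X * (1 + X * s) with hL
    have hdvd1 : (X : Polynomial ℚ) ∣ (1 + X * s) ^ j - 1 := by
      rw [Polynomial.X_dvd_iff, Polynomial.coeff_zero_eq_eval_zero]
      simp
    obtain ⟨t, ht⟩ := hdvd1
    have hLj : L ^ j = X ^ j + X ^ (j + 1) * t := by
      have h1 : (1 + X * s) ^ j = 1 + X * t := by linear_combination ht
      rw [hL, mul_pow, h1, pow_succ]
      ring
    have hIH : ∀ i : ℕ, ∃ Q : Polynomial ℚ,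
        (X : Polynomial ℚ) ^ n ∣ Q.comp L - X ^ (j + 1 + i) :=
      fun i => IH (j + 1 + i) (by omega)
    choose Qf hQf using hIH
    set r := Finset.range (t.natDegree + 1) with hr
    refine ⟨X ^ j - ∑ i ∈ r, Polynomial.C (t.coeff i) * Qf i, ?_⟩
    have hcomp : ((X : Polynomial ℚ) ^ j - ∑ i ∈ r, Polynomial.C (t.coeff i) * Qf i).comp L
        = L ^ j - ∑ i ∈ r, Polynomial.C (t.coeff i) * (Qf i).comp L := by
      rw [sub_comp, pow_comp, X_comp]
      congr 1
      simp only [Polynomial.comp, Polynomial.eval₂_finset_sum]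
      exact Finset.sum_congr rfl fun i _ => by rw [show eval₂ C L (C (t.coeff i) * Qf i) = (C (t.coeff i) * Qf i).comp L from rfl, mul_comp, C_comp]; rfl
    have hts : (X : Polynomial ℚ) ^ (j + 1) * t = ∑ i ∈ r, Polynomial.C (t.coeff i) * X ^ (j + 1 + i) := by
      conv_lhs => rw [Polynomial.as_sum_range' t (t.natDegree + 1) (by omega)]
      rw [Finset.mul_sum]
      refine Finset.sum_congr rfl fun i _ => ?_
      rw [← Polynomial.C_mul_X_pow_eq_monomial, pow_add]
      ring
    have key : L ^ j - (∑ i ∈ r, Polynomial.C (t.coeff i) * (Qf i).comp L) - X ^ j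
        = ∑ i ∈ r, Polynomial.C (t.coeff i) * (X ^ (j + 1 + i) - (Qf i).comp L) := by
      have haux : ∀ a b c : Polynomial ℚ, a + b - c - a = b - c := by intros; ring
      rw [hLj, hts, haux, ← Finset.sum_sub_distrib]
      exact Finset.sum_congr rfl fun i _ => (mul_sub _ _ _).symm
    rw [hcomp, key]
    exact Finset.dvd_sum fun i _ => Dvd.dvd.mul_left (dvd_sub_comm.mp (hQf i)) _


open Polynomial in
/-- Criterion: under the displayed identities, `V_⊤ = ⨁ im π_k` is a direct sum,
is `SL₂(ℤ)`-invariant, and the quotient `V/V_⊤` satisfies `(u-1)^{n-1} = 0`. -/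
theorem Vtop_invariant_and_quotient_shorter
    (n : ℕ) (hn : 2 ≤ n)
    (V : Type*) [AddCommGroup V] [Module ℚ V]
    (ρ : Representation ℚ (Matrix.SpecialLinearGroup (Fin 2) ℤ) V)
    (hlen : (ρ u - 1) ^ n = 0)
    (x : Module.End ℚ V)
    (hx : x = ∑ k ∈ Finset.Icc (1 : ℕ) (n - 1),
      ((-1 : ℚ) ^ (k + 1) * (k : ℚ)⁻¹) • (ρ u - 1) ^ k)
    (heq : ∀ k ∈ Finset.Icc (1 : ℕ) n,
      (((n - k).factorial : ℚ))⁻¹ • (ρ w * x ^ (n - k) * ρ w * x ^ (n - 1)) =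
        ((-1 : ℚ) ^ (n - k) * ((k - 1).factorial : ℚ)⁻¹) • (x ^ (k - 1) * ρ w * x ^ (n - 1)))
    (π : ℕ → Module.End ℚ V)
    (hπ : ∀ k, π k = ((((n - 1).factorial : ℚ)) ^ 2)⁻¹ •
      (x ^ (n - k) * ρ w * x ^ (n - 1) * ρ w * x ^ (k - 1)))
    (Vtop : Submodule ℚ V)
    (hVtop : Vtop = ⨆ k ∈ Finset.Icc (1 : ℕ) n, LinearMap.range (π k)) :
    -- the images of the `π_k` are in direct sum
    iSupIndep
      (fun k : (Finset.Icc (1 : ℕ) n) => LinearMap.range (π k.val)) ∧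
    -- `V_⊤` is invariant under the `SL₂(ℤ)`-action
    (∀ (g : Matrix.SpecialLinearGroup (Fin 2) ℤ), ∀ v ∈ Vtop, ρ g v ∈ Vtop) ∧
    -- the action of `u` on the quotient `V/V_⊤` satisfies `(u-1)^{n-1} = 0`
    (∀ v : V, ((ρ u - 1) ^ (n - 1)) v ∈ Vtop) := by

  classical
  set W : Module.End ℚ V := ρ w with hW
  set N : Module.End ℚ V := ρ u - 1 with hN
  set N1 : ℕ := n - 1 with hN1
  have hnN1 : n = N1 + 1 := by omega
  have hN11 : 1 ≤ N1 := by omega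
  have hNn : N ^ n = 0 := hlen
  -- the polynomial `log(1+X)` truncated
  set LP : Polynomial ℚ :=
    ∑ k ∈ Finset.Icc (1 : ℕ) N1, Polynomial.C ((-1 : ℚ) ^ (k + 1) * (k : ℚ)⁻¹) * X ^ k with hLP
  have hxLP : x = Polynomial.aeval N LP := by
    rw [hx, hLP, map_sum]
    refine Finset.sum_congr rfl fun k hk => ?_
    rw [_root_.map_mul, Polynomial.aeval_C, map_pow, Polynomial.aeval_X, Algebra.smul_def]
  have hLP0 : LP.coeff 0 = 0 := by
    rw [hLP, Polynomial.finset_sum_coeff]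
    refine Finset.sum_eq_zero fun k hk => ?_
    rw [Polynomial.coeff_C_mul, Polynomial.coeff_X_pow, if_neg]
    · ring
    · have := (Finset.mem_Icc.mp hk).1; omega
  have hLP1 : LP.coeff 1 = 1 := by
    rw [hLP, Polynomial.finset_sum_coeff]
    rw [Finset.sum_eq_single 1]
    · simp
    · intro k hk hk1
      rw [Polynomial.coeff_C_mul, Polynomial.coeff_X_pow, if_neg (by omega)]
      ring
    · intro h
      exact absurd (Finset.mem_Icc.mpr ⟨le_refl 1, hN11⟩) h
  have hdX2 : (X : Polynomial ℚ) ^ 2 ∣ LP - X := by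
    rw [Polynomial.X_pow_dvd_iff]
    intro d hd
    interval_cases d <;>
      simp [Polynomial.coeff_sub, hLP0, hLP1, Polynomial.coeff_X_zero, Polynomial.coeff_X_one]
  obtain ⟨s, hs⟩ := hdX2
  have hLPfact : LP = X * (1 + X * s) := by linear_combination hs
  have haevalDvd : ∀ p : Polynomial ℚ, (X : Polynomial ℚ) ^ n ∣ p → Polynomial.aeval N p = 0 := by
    rintro p ⟨q, rfl⟩
    rw [_root_.map_mul, map_pow, Polynomial.aeval_X, hNn, zero_mul]
  have hxpow : ∀ m, n ≤ m → x ^ m = 0 := by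
    intro m hm
    rw [hxLP, ← map_pow]
    apply haevalDvd
    rw [hLPfact, mul_pow]
    exact dvd_mul_of_dvd_left (pow_dvd_pow _ hm) _
  have hxN1 : x ^ N1 = N ^ N1 := by
    have hdvd : (X : Polynomial ℚ) ^ n ∣ LP ^ N1 - X ^ N1 := by
      have hone : (X : Polynomial ℚ) ∣ (1 + X * s) ^ N1 - 1 := by
        rw [Polynomial.X_dvd_iff, Polynomial.coeff_zero_eq_eval_zero]
        simp
      obtain ⟨t, ht⟩ := hone
      have : LP ^ N1 - X ^ N1 = X ^ n * t := by
        rw [hLPfact, mul_pow, hnN1]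
        have h1 : (1 + X * s) ^ N1 = 1 + X * t := by linear_combination ht
        rw [h1, pow_succ]
        ring
      exact ⟨t, this⟩
    have h0 := haevalDvd _ hdvd
    rw [map_sub, map_pow, map_pow, Polynomial.aeval_X, ← hxLP, sub_eq_zero] at h0
    exact h0
  have hNx : ∃ Q : Polynomial ℚ, Polynomial.aeval x Q = N := by
    obtain ⟨Q, hQ⟩ := exists_comp_congr n s n 1 (by omega)
    refine ⟨Q, ?_⟩
    have h1 := haevalDvd _ hQ
    rw [map_sub, Polynomial.aeval_comp, ← hLPfact, ← hxLP, pow_one, Polynomial.aeval_X,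
      sub_eq_zero] at h1
    exact h1
  -- scalars
  set c : ℚ := (((N1.factorial : ℚ)) ^ 2)⁻¹ with hcdef
  set Cc : ℕ → ℚ := fun a => (a.factorial : ℚ) * ((-1 : ℚ) ^ a * (((N1 - a).factorial : ℚ))⁻¹)
    with hCc
  -- the key consequence of `heq`
  have hQs : ∀ a : ℕ, a ≤ N1 →
      W * x ^ a * W * x ^ N1 = Cc a • (x ^ (N1 - a) * W * x ^ N1) := by
    intro a ha
    have h := heq (n - a) (Finset.mem_Icc.mpr ⟨by omega, by omega⟩)
    have e1 : n - (n - a) = a := by omega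
    have e2 : n - a - 1 = N1 - a := by omega
    rw [e1, e2] at h
    have hfac : ((a.factorial : ℚ)) ≠ 0 := Nat.cast_ne_zero.mpr (Nat.factorial_ne_zero _)
    calc W * x ^ a * W * x ^ N1
        = (a.factorial : ℚ) • ((a.factorial : ℚ)⁻¹ • (W * x ^ a * W * x ^ N1)) := by
          rw [smul_smul, mul_inv_cancel₀ hfac, one_smul]
      _ = Cc a • (x ^ (N1 - a) * W * x ^ N1) := by
          rw [h, smul_smul, hCc]
  -- associativity helpers
  have hmul2 : ∀ b e : ℕ, (W * x ^ b) * (x ^ e * W * x ^ N1) = W * x ^ (b + e) * W * x ^ N1 := by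
    intro b e; rw [pow_add]; simp only [mul_assoc]
  have hmul3 : ∀ a e : ℕ, (x ^ a * W * x ^ N1) * (x ^ e * W * x ^ N1)
      = x ^ a * (W * x ^ (N1 + e) * W * x ^ N1) := by
    intro a e; rw [pow_add]; simp only [mul_assoc]
  have hπform : ∀ k, π k = c • ((x ^ (n - k) * W * x ^ N1) * (W * x ^ (k - 1))) := by
    intro k; rw [hπ k, mul_assoc]
  have hfacNe : ((N1.factorial : ℚ)) ≠ 0 := Nat.cast_ne_zero.mpr (Nat.factorial_ne_zero _)
  have hCcN1 : Cc N1 = (N1.factorial : ℚ) * (-1 : ℚ) ^ N1 := by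
    rw [hCc]; simp
  -- the master computation
  have hπτ : ∀ k, 1 ≤ k → k ≤ n → ∀ a,
      π k * (x ^ a * W * x ^ N1) = if a = n - k then x ^ a * W * x ^ N1 else 0 := by
    intro k hk1 hkn a
    rw [hπform k, smul_mul_assoc, mul_assoc, hmul2 (k-1) a]
    by_cases hcase : k - 1 + a ≤ N1
    · rw [hQs (k - 1 + a) hcase, mul_smul_comm, hmul3]
      by_cases haeq : a = n - k
      · have e3 : k - 1 + a = N1 := by omega
        rw [e3, Nat.sub_self, Nat.add_zero, hQs N1 le_rfl, Nat.sub_self, pow_zero, one_mul,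
          mul_smul_comm, if_pos haeq, smul_smul, smul_smul, hCcN1]
        have hscal : c * ((N1.factorial : ℚ) * (-1 : ℚ) ^ N1) * ((N1.factorial : ℚ) * (-1 : ℚ) ^ N1) = 1 := by
          have h4 : ((N1.factorial : ℚ) * (-1 : ℚ) ^ N1) * ((N1.factorial : ℚ) * (-1 : ℚ) ^ N1)
              = ((N1.factorial : ℚ)) ^ 2 := by
            have h5 : ((-1 : ℚ)) ^ N1 * ((-1 : ℚ)) ^ N1 = 1 := by
              rw [← pow_add]; exact Even.neg_one_pow ⟨N1, rfl⟩
            linear_combination ((N1.factorial : ℚ)) ^ 2 * h5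
          rw [hcdef, mul_assoc, h4, inv_mul_cancel₀ (pow_ne_zero 2 hfacNe)]
        rw [hscal, one_smul, haeq, mul_assoc]
      · have e6 : 1 ≤ N1 - (k - 1 + a) := by omega
        have e7 : n ≤ N1 + (N1 - (k - 1 + a)) := by omega
        rw [hxpow _ e7]
        rw [if_neg haeq]
        simp
    · have e8 : n ≤ k - 1 + a := by omega
      rw [hxpow _ e8, if_neg (by omega)]
      simp
  -- orthogonal idempotents
  have hππ : ∀ j k, 1 ≤ j → j ≤ n → 1 ≤ k → k ≤ n →
      π j * π k = if j = k then π k else 0 := by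
    intro j k hj1 hjn hk1 hkn
    rw [hπform k, mul_smul_comm, ← mul_assoc, hπτ j hj1 hjn (n - k)]
    by_cases hjk : j = k
    · rw [if_pos hjk, if_pos (by omega), ← hπform k]
    · rw [if_neg hjk, if_neg (by omega), zero_mul, smul_zero]
  -- membership of the generators in Vtop
  have hτmem : ∀ (a : ℕ) (v : V), (x ^ a * W * x ^ N1) v ∈ Vtop := by
    intro a v
    by_cases ha : a ≤ N1
    · have hk := hπτ (n - a) (by omega) (by omega) a
      rw [if_pos (by omega)] at hk
      have hrange : LinearMap.range (π (n - a)) ≤ Vtop := by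
        rw [hVtop]
        exact le_iSup₂ (f := fun k (_ : k ∈ Finset.Icc 1 n) => LinearMap.range (π k)) (n - a)
          (Finset.mem_Icc.mpr ⟨by omega, by omega⟩)
      have : (x ^ a * W * x ^ N1) v = π (n - a) ((x ^ a * W * x ^ N1) v) := by
        conv_lhs => rw [← hk]
        rw [Module.End.mul_apply]
      rw [this]
      exact hrange (LinearMap.mem_range_self _ _)
    · rw [hxpow a (by omega)]
      simp
  have hVle : ∀ A : Module.End ℚ V,
      (∀ a, a ≤ N1 → ∀ v : V, A ((x ^ a * W * x ^ N1) v) ∈ Vtop) →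
      ∀ v ∈ Vtop, A v ∈ Vtop := by
    intro A hA v hv
    have hsup : (⨆ k ∈ Finset.Icc (1 : ℕ) n, LinearMap.range (π k)) ≤ Submodule.comap A Vtop := by
      refine iSup₂_le fun k hk => ?_
      rintro v' ⟨v0, rfl⟩
      have hk' := Finset.mem_Icc.mp hk
      rw [Submodule.mem_comap, hπform k]
      have happ : (c • (x ^ (n - k) * W * x ^ N1 * (W * x ^ (k - 1)))) v0
          = c • ((x ^ (n - k) * W * x ^ N1) ((W * x ^ (k - 1)) v0)) := by
        rw [LinearMap.smul_apply, Module.End.mul_apply]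
      rw [happ, _root_.map_smul]
      exact Submodule.smul_mem _ _ (hA (n - k) (by omega) _)
    have : Vtop ≤ Submodule.comap A Vtop := hVtop ▸ hsup
    exact this hv
  have hxshift : ∀ (i a : ℕ), x ^ i * (x ^ a * W * x ^ N1) = x ^ (a + i) * W * x ^ N1 := by
    intro i a
    rw [← mul_assoc, ← mul_assoc, ← pow_add, Nat.add_comm i a]
  have hNmem : ∀ v ∈ Vtop, N v ∈ Vtop := by
    obtain ⟨Q, hQ⟩ := hNx
    refine hVle N fun a ha v => ?_
    rw [← hQ, Polynomial.aeval_eq_sum_range]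
    rw [LinearMap.sum_apply]
    refine Submodule.sum_mem _ fun i _ => ?_
    rw [LinearMap.smul_apply]
    refine Submodule.smul_mem _ _ ?_
    rw [← Module.End.mul_apply, hxshift i a]
    exact hτmem _ _
  have hWmem : ∀ v ∈ Vtop, W v ∈ Vtop := by
    refine hVle W fun a ha v => ?_
    rw [← Module.End.mul_apply]
    have hWτ : W * (x ^ a * W * x ^ N1) = Cc a • (x ^ (N1 - a) * W * x ^ N1) := by
      rw [← hQs a ha, ← mul_assoc, ← mul_assoc]
    rw [hWτ, LinearMap.smul_apply]
    exact Submodule.smul_mem _ _ (hτmem _ _)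
  have humem : ∀ v ∈ Vtop, ρ u v ∈ Vtop := by
    intro v hv
    have hval : ρ u v = v + N v := by
      rw [hN]
      simp
    rw [hval]
    exact Submodule.add_mem _ hv (hNmem v hv)
  have hnegpow : ∀ (i : ℕ), ∀ v ∈ Vtop, ((-N) ^ i) v ∈ Vtop := by
    intro i
    induction i with
    | zero => intro v hv; simpa using hv
    | succ i ih =>
        intro v hv
        rw [pow_succ, Module.End.mul_apply]
        refine ih _ ?_
        rw [LinearMap.neg_apply]
        exact Submodule.neg_mem _ (hNmem v hv)
  have huinvmem : ∀ v ∈ Vtop, ρ u⁻¹ v ∈ Vtop := by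
    have hS : ρ u⁻¹ = ∑ i ∈ Finset.range n, (-N) ^ i := by
      have h1 : ρ u * ∑ i ∈ Finset.range n, (-N) ^ i = 1 := by
        have h2 := mul_geom_sum (-N) n
        have hNn' : (-N) ^ n = 0 := by
          rw [neg_pow, hNn, mul_zero]
        rw [hNn', zero_sub] at h2
        have h3 : ρ u = -(-N - 1) := by rw [hN]; abel
        rw [h3, neg_mul, h2, neg_neg]
      calc ρ u⁻¹ = ρ u⁻¹ * (ρ u * ∑ i ∈ Finset.range n, (-N) ^ i) := by rw [h1, mul_one]
        _ = (ρ u⁻¹ * ρ u) * ∑ i ∈ Finset.range n, (-N) ^ i := by rw [mul_assoc]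
        _ = ∑ i ∈ Finset.range n, (-N) ^ i := by
            rw [← _root_.map_mul, inv_mul_cancel, _root_.map_one, one_mul]
    intro v hv
    rw [hS, LinearMap.sum_apply]
    exact Submodule.sum_mem _ fun i _ => hnegpow i v hv
  have hwinv3 : (w⁻¹ : Matrix.SpecialLinearGroup (Fin 2) ℤ) = w * (w * w) := by
    apply inv_eq_of_mul_eq_one_right
    apply Subtype.ext
    show (w * (w * (w * w)) : Matrix.SpecialLinearGroup (Fin 2) ℤ).1 = (1 : Matrix (Fin 2) (Fin 2) ℤ)
    rw [Matrix.SpecialLinearGroup.coe_mul, Matrix.SpecialLinearGroup.coe_mul,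
      Matrix.SpecialLinearGroup.coe_mul]
    simp [w, Matrix.mul_fin_two, Matrix.one_fin_two]
  have hwinvmem : ∀ v ∈ Vtop, ρ w⁻¹ v ∈ Vtop := by
    intro v hv
    rw [hwinv3]
    simp only [_root_.map_mul, Module.End.mul_apply]
    exact hWmem _ (hWmem _ (hWmem _ hv))
  -- Part 2 : invariance under the whole group
  have hpart2 : ∀ (g : Matrix.SpecialLinearGroup (Fin 2) ℤ), ∀ v ∈ Vtop, ρ g v ∈ Vtop := by
    have key : ∀ g : Matrix.SpecialLinearGroup (Fin 2) ℤ,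
        (∀ v ∈ Vtop, ρ g v ∈ Vtop) ∧ (∀ v ∈ Vtop, ρ g⁻¹ v ∈ Vtop) := by
      intro g
      refine Subgroup.closure_induction
        (p := fun g _ => (∀ v ∈ Vtop, ρ g v ∈ Vtop) ∧ (∀ v ∈ Vtop, ρ g⁻¹ v ∈ Vtop))
        ?_ ?_ ?_ ?_ (mem_closure_uw g)
      · rintro g (rfl | rfl)
        · exact ⟨humem, huinvmem⟩
        · exact ⟨fun v hv => hWmem v hv, hwinvmem⟩
      · constructor <;>
          · intro v hv
            simpa using hv
      · rintro g h _ _ ⟨hg1, hg2⟩ ⟨hh1, hh2⟩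
        constructor
        · intro v hv
          rw [_root_.map_mul, Module.End.mul_apply]
          exact hg1 _ (hh1 _ hv)
        · intro v hv
          rw [_root_.mul_inv_rev, _root_.map_mul, Module.End.mul_apply]
          exact hh2 _ (hg2 _ hv)
      · rintro g _ ⟨hg1, hg2⟩
        exact ⟨hg2, by rw [inv_inv]; exact hg1⟩
    exact fun g => (key g).1
  -- Part 3 : (u-1)^(n-1) lands in Vtop
  have hpart3 : ∀ v : V, (N ^ N1) v ∈ Vtop := by
    intro v
    rw [← hxN1]
    have hWW : ρ (w * w) ((x ^ N1) v) = (N1.factorial : ℚ)⁻¹ • ((x ^ N1 * W * x ^ N1) v) := by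
      have h0 := hQs 0 (by omega)
      rw [pow_zero, mul_one, Nat.sub_zero] at h0
      have hCc0 : Cc 0 = (N1.factorial : ℚ)⁻¹ := by rw [hCc]; simp
      rw [hCc0] at h0
      rw [_root_.map_mul, ← hW, Module.End.mul_apply, ← Module.End.mul_apply, ← Module.End.mul_apply,
        h0, LinearMap.smul_apply]
    have hid : ρ ((w * w)⁻¹) (ρ (w * w) ((x ^ N1) v)) = (x ^ N1) v := by
      rw [← Module.End.mul_apply, ← _root_.map_mul, inv_mul_cancel, _root_.map_one,
        Module.End.one_apply]
    rw [← hid, hWW]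
    refine hpart2 _ _ ?_
    exact Submodule.smul_mem _ _ (hτmem _ _)
  -- Part 1 : independence
  refine ⟨?_, hpart2, hpart3⟩
  intro i
  rw [Submodule.disjoint_def]
  intro v hv1 hv2
  have hi := Finset.mem_Icc.mp i.2
  obtain ⟨v0, hv0⟩ := hv1
  have hvfix : π i.1 v = v := by
    rw [← hv0, ← Module.End.mul_apply, hππ i.1 i.1 hi.1 hi.2 hi.1 hi.2, if_pos rfl]
  have hker : (⨆ (j : (Finset.Icc (1 : ℕ) n)) (_ : j ≠ i), LinearMap.range (π j.val))
      ≤ LinearMap.ker (π i.1) := by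
    refine iSup₂_le fun j hj => ?_
    rintro v' ⟨v1, rfl⟩
    have hjm := Finset.mem_Icc.mp j.2
    rw [LinearMap.mem_ker, ← Module.End.mul_apply,
      hππ i.1 j.1 hi.1 hi.2 hjm.1 hjm.2, if_neg (fun h => hj (Subtype.ext h).symm)]
    rw [LinearMap.zero_apply]
  have hv0' := hker hv2
  rw [LinearMap.mem_ker] at hv0'
  rw [← hvfix, hv0']
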